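/- Let f = x·y ∈ ℂ[[x,y]] (an ordinary double point) and O = ℂ[[x,y]]/(xy). Then M(f) = {(a,b) ∈ O² : a·x̄ = b·ȳ} equals the submodule ȳ·O ⊕ x̄·O of O², it is isomorphic as an O-module to the integral closure Õ of O in its total ring of fractions, and M(f)/ι(O) has ℂ-dimension 1, where ι(c) = (c·ȳ, c·x̄). (This is the local content of the example: for a plane curve X with only ordinary double points, ω_X^0 ≅ Õ_X.) -/

import Mathlib

set_option synthInstance.maxHeartbeats 1000000
set_option maxHeartbeats 1000000

/-- The local ring `O = ℂ[[x,y]]/(xy)` of the nodal plane curve germ. -/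
abbrev nodeRing : Type :=
  MvPowerSeries (Fin 2) ℂ ⧸
    Ideal.span {(MvPowerSeries.X 0 * MvPowerSeries.X 1 : MvPowerSeries (Fin 2) ℂ)}

/-- The image `x̄` of `x` in `O = ℂ[[x,y]]/(xy)`. -/
noncomputable def xbar : nodeRing := Ideal.Quotient.mk _ (MvPowerSeries.X 0)

/-- The image `ȳ` of `y` in `O = ℂ[[x,y]]/(xy)`. -/
noncomputable def ybar : nodeRing := Ideal.Quotient.mk _ (MvPowerSeries.X 1)

/-- `M(xy) = {(a,b) ∈ O² : a·x̄ = b·ȳ}` (here `f_x = y`, `f_y = x`, so the Barlet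
condition `a·η = b·ξ` reads `a·x̄ = b·ȳ`), as an `O`-submodule of `O²`. -/
noncomputable def nodeBarletModule : Submodule nodeRing (nodeRing × nodeRing) :=
  LinearMap.ker
    (xbar • LinearMap.fst nodeRing nodeRing nodeRing
      - ybar • LinearMap.snd nodeRing nodeRing nodeRing)

/-- The natural map `ι : O → O²`, `ι(c) = (c·ȳ, c·x̄) = (c·f̄_x, c·f̄_y)`, as a
`ℂ`-linear map. -/
noncomputable def nodeIota : nodeRing →ₗ[ℂ] nodeRing × nodeRing :=
  LinearMap.prod (LinearMap.mulRight ℂ ybar) (LinearMap.mulRight ℂ xbar)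

noncomputable section

open MvPowerSeries

/-- helper: membership in antidiagonal of a single -/
lemma antidiag_single {i : Fin 2} {n : ℕ} {p : (Fin 2 →₀ ℕ) × (Fin 2 →₀ ℕ)}
    (h : p.1 + p.2 = Finsupp.single i n) :
    p.1 = Finsupp.single i (p.1 i) ∧ p.2 = Finsupp.single i (p.2 i) ∧ p.1 i + p.2 i = n := by
  have hz : ∀ j, j ≠ i → p.1 j = 0 ∧ p.2 j = 0 := by
    intro j hj
    have := congrArg (fun m => m j) h
    simp [Finsupp.single_apply, (Ne.symm hj)] at this
    omega
  refine ⟨?_, ?_, ?_⟩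
  · ext j
    by_cases hj : j = i
    · subst hj; simp
    · simp [Finsupp.single_apply, Ne.symm hj, (hz j hj).1]
  · ext j
    by_cases hj : j = i
    · subst hj; simp
    · simp [Finsupp.single_apply, Ne.symm hj, (hz j hj).2]
  · have := congrArg (fun m => m i) h
    simpa using this

/-- The "set the other variable to zero" ring hom `ℂ[[x,y]] → ℂ[[t]]`
keeping only the monomials in variable `i`. -/
def pev (i : Fin 2) : MvPowerSeries (Fin 2) ℂ →+* PowerSeries ℂ where
  toFun f := PowerSeries.mk fun n => MvPowerSeries.coeff (Finsupp.single i n) f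
  map_zero' := by ext n; simp
  map_one' := by
    ext n
    simp [MvPowerSeries.coeff_one, PowerSeries.coeff_one, Finsupp.single_eq_zero]
  map_add' f g := by ext n; simp
  map_mul' f g := by
    ext n
    rw [PowerSeries.coeff_mk, MvPowerSeries.coeff_mul, PowerSeries.coeff_mul]
    refine Finset.sum_nbij' (fun p => (p.1 i, p.2 i))
      (fun p => (Finsupp.single i p.1, Finsupp.single i p.2)) ?_ ?_ ?_ ?_ ?_
    · intro a ha
      rw [Finset.HasAntidiagonal.mem_antidiagonal] at ha ⊢
      exact (antidiag_single ha).2.2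
    · intro a ha
      rw [Finset.HasAntidiagonal.mem_antidiagonal] at ha ⊢
      rw [← Finsupp.single_add, ha]
    · intro a ha
      rw [Finset.HasAntidiagonal.mem_antidiagonal] at ha
      obtain ⟨h1, h2, _⟩ := antidiag_single ha
      exact Prod.ext h1.symm h2.symm
    · intro a ha; simp
    · intro a ha
      obtain ⟨h1, h2, _⟩ := antidiag_single (Finset.HasAntidiagonal.mem_antidiagonal.mp ha)
      rw [PowerSeries.coeff_mk, PowerSeries.coeff_mk, ← h1, ← h2]

lemma pev_coeff (i : Fin 2) (f : MvPowerSeries (Fin 2) ℂ) (n : ℕ) :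
    PowerSeries.coeff n (pev i f) = MvPowerSeries.coeff (Finsupp.single i n) f := by
  simp [pev, PowerSeries.coeff_mk]

lemma pev_X_self (i : Fin 2) : pev i (X i) = PowerSeries.X := by
  ext n
  rw [pev_coeff, MvPowerSeries.coeff_X, PowerSeries.coeff_X]
  by_cases h : n = 1
  · subst h; simp
  · rw [if_neg, if_neg h]
    intro hc
    have := congrArg (fun m => m i) hc
    simp at this; omega

lemma pev_X_ne {i j : Fin 2} (h : j ≠ i) : pev i (X j) = 0 := by
  ext n
  rw [pev_coeff, MvPowerSeries.coeff_X]
  rw [if_neg]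
  · simp
  intro hc
  have := congrArg (fun m => m j) hc
  simp [Finsupp.single_apply, h, Ne.symm h] at this

lemma pev_C (i : Fin 2) (r : ℂ) : pev i (MvPowerSeries.C r) = PowerSeries.C r := by
  ext n
  rw [pev_coeff, MvPowerSeries.coeff_C, PowerSeries.coeff_C]
  simp [Finsupp.single_eq_zero]

/-- `pev i f = 0` iff the other variable divides `f`. -/
lemma pev_eq_zero_iff {i j : Fin 2} (h : j ≠ i) (f : MvPowerSeries (Fin 2) ℂ) :
    pev i f = 0 ↔ (X j : MvPowerSeries (Fin 2) ℂ) ∣ f := by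
  rw [MvPowerSeries.X_dvd_iff]
  constructor
  · intro hf m hm
    have hm2 : m = Finsupp.single i (m i) := by
      ext k
      by_cases hk : k = i
      · subst hk; simp
      · have : k = j := by omega
        subst this
        simp [Finsupp.single_apply, Ne.symm hk, hm]
    rw [hm2, ← pev_coeff, hf]
    simp
  · intro hf
    ext n
    rw [pev_coeff, map_zero]
    apply hf
    rw [Finsupp.single_apply, if_neg (fun hh => h hh.symm)]

lemma mem_span_XY_iff (f : MvPowerSeries (Fin 2) ℂ) :
    f ∈ Ideal.span {(X 0 * X 1 : MvPowerSeries (Fin 2) ℂ)} ↔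
      pev 0 f = 0 ∧ pev 1 f = 0 := by
  rw [Ideal.mem_span_singleton]
  constructor
  · rintro ⟨c, rfl⟩
    constructor
    · rw [map_mul, map_mul, pev_X_ne (show (1:Fin 2) ≠ 0 by decide)]
      ring
    · rw [map_mul, map_mul, pev_X_ne (show (0:Fin 2) ≠ 1 by decide)]
      ring
  · rintro ⟨h0, h1⟩
    rw [pev_eq_zero_iff (i := 0) (j := 1) (by decide)] at h0
    obtain ⟨g, rfl⟩ := h0
    rw [map_mul, pev_X_self] at h1
    have hg : pev 1 g = 0 := by
      rcases mul_eq_zero.mp h1 with h | h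
      · exact absurd h PowerSeries.X_ne_zero
      · exact h
    rw [pev_eq_zero_iff (i := 1) (j := 0) (by decide)] at hg
    obtain ⟨g', rfl⟩ := hg
    exact ⟨g', by ring⟩

end
noncomputable section

abbrev Pr : Type := PowerSeries ℂ × PowerSeries ℂ

/-- The embedding `O → ℂ[[x]] × ℂ[[y]]`. -/
def phi : nodeRing →+* Pr :=
  Ideal.Quotient.lift _ ((pev 0).prod (pev 1)) (by
    intro a ha
    rw [mem_span_XY_iff] at ha
    exact Prod.ext (by simpa using ha.1) (by simpa using ha.2))

lemma phi_mk (f : MvPowerSeries (Fin 2) ℂ) :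
    phi (Ideal.Quotient.mk _ f) = (pev 0 f, pev 1 f) := rfl

lemma phi_injective : Function.Injective phi := by
  intro a b hab
  obtain ⟨f, rfl⟩ := Ideal.Quotient.mk_surjective a
  obtain ⟨g, rfl⟩ := Ideal.Quotient.mk_surjective b
  rw [Ideal.Quotient.eq, mem_span_XY_iff]
  rw [phi_mk, phi_mk, Prod.ext_iff] at hab
  constructor
  · simpa [map_sub] using sub_eq_zero.mpr hab.1
  · simpa [map_sub] using sub_eq_zero.mpr hab.2

lemma phi_xbar : phi xbar = (PowerSeries.X, 0) := by
  rw [xbar, phi_mk, pev_X_self, pev_X_ne (show (0:Fin 2) ≠ 1 by decide)]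

lemma phi_ybar : phi ybar = (0, PowerSeries.X) := by
  rw [ybar, phi_mk, pev_X_self, pev_X_ne (show (1:Fin 2) ≠ 0 by decide)]

lemma const_phi (c : nodeRing) :
    PowerSeries.constantCoeff (phi c).1 = PowerSeries.constantCoeff (phi c).2 := by
  obtain ⟨f, rfl⟩ := Ideal.Quotient.mk_surjective c
  rw [phi_mk]
  have : PowerSeries.coeff 0 (pev 0 f) = PowerSeries.coeff 0 (pev 1 f) := by
    rw [pev_coeff, pev_coeff]
    simp
  simpa [← PowerSeries.coeff_zero_eq_constantCoeff] using this

/-- Lifting matched pairs of power series to `O`. -/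
lemma exists_lift (p q : PowerSeries ℂ)
    (h : PowerSeries.constantCoeff p = PowerSeries.constantCoeff q) :
    ∃ c : nodeRing, phi c = (p, q) := by
  classical
  set G : MvPowerSeries (Fin 2) ℂ := fun m =>
    if m 1 = 0 then PowerSeries.coeff (m 0) p
    else if m 0 = 0 then PowerSeries.coeff (m 1) q else 0 with hG
  refine ⟨Ideal.Quotient.mk _ G, ?_⟩
  rw [phi_mk, Prod.ext_iff]
  constructor
  · ext n
    rw [pev_coeff]
    show G _ = _
    rw [hG]
    simp
  · ext n
    rw [pev_coeff]
    show G _ = _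
    rw [hG]
    by_cases hn : n = 0
    · subst hn
      simpa using h
    · simp [Finsupp.single_apply, hn]

lemma mem_span_ybar_iff (a : nodeRing) : a ∈ Ideal.span {ybar} ↔ (phi a).1 = 0 := by
  rw [Ideal.mem_span_singleton]
  constructor
  · rintro ⟨c, rfl⟩
    rw [map_mul, phi_ybar]
    simp [Prod.mul_def]
  · intro h
    have h0 : PowerSeries.constantCoeff (phi a).2 = 0 := by
      rw [← const_phi, h, map_zero]
    obtain ⟨q', hq'⟩ := PowerSeries.X_dvd_iff.mpr h0
    obtain ⟨c, hc⟩ := exists_lift (PowerSeries.C (PowerSeries.constantCoeff q')) q' (by simp)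
    refine ⟨c, phi_injective ?_⟩
    rw [map_mul, phi_ybar, hc, Prod.mul_def]
    simp [h, ← hq']
    exact Prod.ext h rfl

lemma mem_span_xbar_iff (b : nodeRing) : b ∈ Ideal.span {xbar} ↔ (phi b).2 = 0 := by
  rw [Ideal.mem_span_singleton]
  constructor
  · rintro ⟨c, rfl⟩
    rw [map_mul, phi_xbar]
    simp [Prod.mul_def]
  · intro h
    have h0 : PowerSeries.constantCoeff (phi b).1 = 0 := by
      rw [const_phi, h, map_zero]
    obtain ⟨p', hp'⟩ := PowerSeries.X_dvd_iff.mpr h0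
    obtain ⟨c, hc⟩ := exists_lift p' (PowerSeries.C (PowerSeries.constantCoeff p')) (by simp)
    refine ⟨c, phi_injective ?_⟩
    rw [map_mul, phi_xbar, hc, Prod.mul_def]
    exact Prod.ext (by simp [hp']) (by simpa using h)

end

noncomputable section

lemma mem_M_iff (a b : nodeRing) :
    (a, b) ∈ nodeBarletModule ↔ (phi a).1 = 0 ∧ (phi b).2 = 0 := by
  rw [nodeBarletModule, LinearMap.mem_ker]
  have hlhs : (xbar • LinearMap.fst nodeRing nodeRing nodeRing
      - ybar • LinearMap.snd nodeRing nodeRing nodeRing) (a, b) = xbar * a - ybar * b := rfl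
  rw [hlhs, sub_eq_zero]
  constructor
  · intro h
    have := congrArg phi h
    rw [map_mul, map_mul, phi_xbar, phi_ybar, Prod.mul_def, Prod.mul_def, Prod.ext_iff] at this
    simp only [zero_mul, mul_zero] at this
    have h1 : PowerSeries.X * (phi a).1 = 0 := this.1
    have h2 : PowerSeries.X * (phi b).2 = 0 := by
      rw [← this.2]
    constructor
    · rcases mul_eq_zero.mp h1 with h | h
      · exact absurd h PowerSeries.X_ne_zero
      · exact h
    · rcases mul_eq_zero.mp h2 with h | h
      · exact absurd h PowerSeries.X_ne_zero
      · exact h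
  · rintro ⟨h1, h2⟩
    apply phi_injective
    rw [map_mul, map_mul, phi_xbar, phi_ybar, Prod.mul_def, Prod.mul_def]
    simp [h1, h2]

theorem part1 : nodeBarletModule =
    Submodule.prod (Ideal.span {ybar}) (Ideal.span {xbar}) := by
  ext ⟨a, b⟩
  rw [mem_M_iff, Submodule.mem_prod]
  show _ ↔ a ∈ Ideal.span {ybar} ∧ b ∈ Ideal.span {xbar}
  rw [mem_span_ybar_iff, mem_span_xbar_iff]

end

noncomputable section

abbrev LL : Type := LaurentSeries ℂ
abbrev K0 : Type := LL × LL

def Psi : nodeRing →+* K0 :=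
  (RingHom.prodMap (algebraMap (PowerSeries ℂ) LL) (algebraMap (PowerSeries ℂ) LL)).comp phi

lemma Psi_apply (c : nodeRing) :
    Psi c = (algebraMap (PowerSeries ℂ) LL (phi c).1, algebraMap (PowerSeries ℂ) LL (phi c).2) :=
  rfl

lemma algPSL_injective : Function.Injective (algebraMap (PowerSeries ℂ) LL) :=
  IsFractionRing.injective _ _

lemma Psi_injective : Function.Injective Psi := by
  intro a b hab
  rw [Psi_apply, Psi_apply, Prod.ext_iff] at hab
  apply phi_injective
  exact Prod.ext (algPSL_injective hab.1) (algPSL_injective hab.2)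

lemma xbar_mul_ybar : xbar * ybar = 0 := by
  apply phi_injective
  rw [map_mul, phi_xbar, phi_ybar, map_zero, Prod.mul_def]
  simp

lemma xbar_ne_zero : xbar ≠ 0 := by
  intro h
  have := congrArg phi h
  rw [phi_xbar, map_zero, Prod.ext_iff] at this
  exact PowerSeries.X_ne_zero this.1

lemma ybar_ne_zero : ybar ≠ 0 := by
  intro h
  have := congrArg phi h
  rw [phi_ybar, map_zero, Prod.ext_iff] at this
  exact PowerSeries.X_ne_zero this.2

lemma mem_nzd_iff (s : nodeRing) :
    s ∈ nonZeroDivisors nodeRing ↔ (phi s).1 ≠ 0 ∧ (phi s).2 ≠ 0 := by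
  constructor
  · intro hs
    constructor
    · intro h1
      obtain ⟨c, rfl⟩ := Ideal.mem_span_singleton.mp ((mem_span_ybar_iff s).mpr h1)
      have hx : xbar * (ybar * c) = 0 := by
        rw [← mul_assoc, xbar_mul_ybar, zero_mul]
      exact xbar_ne_zero (mem_nonZeroDivisors_iff_right.mp hs xbar hx)
    · intro h2
      obtain ⟨c, rfl⟩ := Ideal.mem_span_singleton.mp ((mem_span_xbar_iff s).mpr h2)
      have hy : ybar * (xbar * c) = 0 := by
        rw [← mul_assoc, mul_comm ybar xbar, xbar_mul_ybar, zero_mul]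
      exact ybar_ne_zero (mem_nonZeroDivisors_iff_right.mp hs ybar hy)
  · rintro ⟨h1, h2⟩; refine mem_nonZeroDivisors_iff_right.mpr fun g hg => ?_
    apply phi_injective
    rw [map_zero]
    have := congrArg phi hg
    rw [map_mul, map_zero, Prod.mul_def, Prod.ext_iff] at this
    refine Prod.ext ?_ ?_
    · exact (mul_eq_zero.mp this.1).resolve_right h1
    · exact (mul_eq_zero.mp this.2).resolve_right h2

instance algNodeK0 : Algebra nodeRing K0 := Psi.toAlgebra

lemma algebraMap_K0_eq : algebraMap nodeRing K0 = Psi := rfl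

instance : IsFractionRing nodeRing K0 where
  map_units := by
    rintro ⟨s, hs⟩
    obtain ⟨h1, h2⟩ := (mem_nzd_iff s).mp hs
    have u1 : IsUnit (algebraMap (PowerSeries ℂ) LL (phi s).1) :=
      (isUnit_iff_ne_zero).mpr (fun h => h1 (algPSL_injective (by rw [h, map_zero])))
    have u2 : IsUnit (algebraMap (PowerSeries ℂ) LL (phi s).2) :=
      (isUnit_iff_ne_zero).mpr (fun h => h2 (algPSL_injective (by rw [h, map_zero])))
    rw [algebraMap_K0_eq, Psi_apply]
    exact ⟨MulEquiv.prodUnits.symm (u1.unit, u2.unit),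
      Prod.ext (by simp [MulEquiv.prodUnits]) (by simp [MulEquiv.prodUnits])⟩
  surj := by
    intro z
    obtain ⟨⟨p, xs⟩, hp⟩ :=
      IsLocalization.surj (M := Submonoid.powers (PowerSeries.X : PowerSeries ℂ)) z.1
    obtain ⟨m, hm⟩ := xs.2
    obtain ⟨⟨q, ys⟩, hq⟩ :=
      IsLocalization.surj (M := Submonoid.powers (PowerSeries.X : PowerSeries ℂ)) z.2
    obtain ⟨n, hn⟩ := ys.2
    set k := m + n + 1 with hk
    have hp' : z.1 * algebraMap (PowerSeries ℂ) LL (PowerSeries.X ^ m)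
        = algebraMap (PowerSeries ℂ) LL p := by
      rw [show (PowerSeries.X ^ m : PowerSeries ℂ) = ↑xs from hm]; exact hp
    have hq' : z.2 * algebraMap (PowerSeries ℂ) LL (PowerSeries.X ^ n)
        = algebraMap (PowerSeries ℂ) LL q := by
      rw [show (PowerSeries.X ^ n : PowerSeries ℂ) = ↑ys from hn]; exact hq
    obtain ⟨c, hc⟩ := exists_lift (p * PowerSeries.X ^ (n + 1)) (q * PowerSeries.X ^ (m + 1))
      (by simp)
    have hsk : phi (xbar ^ k + ybar ^ k) = (PowerSeries.X ^ k, PowerSeries.X ^ k) := by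
      rw [map_add, map_pow, map_pow, phi_xbar, phi_ybar]
      refine Prod.ext ?_ ?_ <;>
        simp [Prod.pow_def, zero_pow (show k ≠ 0 by omega)]
    have hsnzd : xbar ^ k + ybar ^ k ∈ nonZeroDivisors nodeRing := by
      rw [mem_nzd_iff, hsk]
      exact ⟨pow_ne_zero _ PowerSeries.X_ne_zero, pow_ne_zero _ PowerSeries.X_ne_zero⟩
    refine ⟨⟨c, ⟨xbar ^ k + ybar ^ k, hsnzd⟩⟩, ?_⟩
    rw [algebraMap_K0_eq, Psi_apply, Psi_apply, hsk, hc]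
    refine Prod.ext ?_ ?_
    · show z.1 * algebraMap (PowerSeries ℂ) LL (PowerSeries.X ^ k) = _
      rw [hk, show m + n + 1 = m + (n + 1) by ring, pow_add, map_mul, ← mul_assoc, hp',
        ← map_mul]
    · show z.2 * algebraMap (PowerSeries ℂ) LL (PowerSeries.X ^ k) = _
      rw [hk, show m + n + 1 = n + (m + 1) by ring, pow_add, map_mul, ← mul_assoc, hq',
        ← map_mul]
  exists_of_eq := by
    intro a b hab
    exact ⟨1, by rw [Psi_injective hab]⟩

end

noncomputable section

open Polynomial in
lemma mem_intcl_iff (z : K0) :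
    z ∈ integralClosure nodeRing K0 ↔
      ∃ p q : PowerSeries ℂ,
        z = (algebraMap (PowerSeries ℂ) LL p, algebraMap (PowerSeries ℂ) LL q) := by
  constructor
  · rintro ⟨P, hm, he⟩
    have h1 : IsIntegral (PowerSeries ℂ) z.1 := by
      refine ⟨P.map ((RingHom.fst (PowerSeries ℂ) (PowerSeries ℂ)).comp phi), hm.map _, ?_⟩
      rw [Polynomial.eval₂_map]
      have hcomp : (algebraMap (PowerSeries ℂ) LL).comp
          ((RingHom.fst (PowerSeries ℂ) (PowerSeries ℂ)).comp phi)
          = (RingHom.fst LL LL).comp (algebraMap nodeRing K0) := rfl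
      rw [hcomp]
      have h' : (RingHom.fst LL LL) (Polynomial.eval₂ (algebraMap nodeRing K0) z P)
          = Polynomial.eval₂ ((RingHom.fst LL LL).comp (algebraMap nodeRing K0)) z.1 P :=
        Polynomial.hom_eval₂ P _ _ z
      rw [← h', he, map_zero]
    have h2 : IsIntegral (PowerSeries ℂ) z.2 := by
      refine ⟨P.map ((RingHom.snd (PowerSeries ℂ) (PowerSeries ℂ)).comp phi), hm.map _, ?_⟩
      rw [Polynomial.eval₂_map]
      have hcomp : (algebraMap (PowerSeries ℂ) LL).comp
          ((RingHom.snd (PowerSeries ℂ) (PowerSeries ℂ)).comp phi)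
          = (RingHom.snd LL LL).comp (algebraMap nodeRing K0) := rfl
      rw [hcomp]
      have h' : (RingHom.snd LL LL) (Polynomial.eval₂ (algebraMap nodeRing K0) z P)
          = Polynomial.eval₂ ((RingHom.snd LL LL).comp (algebraMap nodeRing K0)) z.2 P :=
        Polynomial.hom_eval₂ P _ _ z
      rw [← h', he, map_zero]
    obtain ⟨p, hp⟩ := IsIntegrallyClosed.isIntegral_iff.mp h1
    obtain ⟨q, hq⟩ := IsIntegrallyClosed.isIntegral_iff.mp h2
    exact ⟨p, q, by rw [hp, hq]⟩
  · rintro ⟨p, q, rfl⟩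
    set c0 := PowerSeries.constantCoeff p with hc0
    set d0 := PowerSeries.constantCoeff q with hd0
    obtain ⟨s, hs⟩ := exists_lift (p + PowerSeries.C d0) (q + PowerSeries.C c0)
      (by simp [add_comm, hc0, hd0])
    obtain ⟨w, hw⟩ := exists_lift (p * PowerSeries.C d0) (PowerSeries.C c0 * q)
      (by simp [mul_comm, hc0, hd0])
    refine ⟨X ^ 2 + C (-s) * X + C w, ?_, ?_⟩
    · rw [add_assoc]
      apply Polynomial.monic_X_pow_add
      calc degree (C (-s) * X + C w) ≤ 1 := Polynomial.degree_linear_le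
        _ < (2 : ℕ) := by norm_num
    · have : Polynomial.eval₂ (algebraMap nodeRing K0)
          (algebraMap (PowerSeries ℂ) LL p, algebraMap (PowerSeries ℂ) LL q)
          (X ^ 2 + C (-s) * X + C w)
          = (algebraMap (PowerSeries ℂ) LL p, algebraMap (PowerSeries ℂ) LL q) ^ 2
            + algebraMap nodeRing K0 (-s)
              * (algebraMap (PowerSeries ℂ) LL p, algebraMap (PowerSeries ℂ) LL q)
            + algebraMap nodeRing K0 w := by
        simp only [Polynomial.eval₂_add, Polynomial.eval₂_mul, Polynomial.eval₂_pow,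
          Polynomial.eval₂_X, Polynomial.eval₂_C, Polynomial.eval₂_neg, map_neg]
        try ring
      rw [this, algebraMap_K0_eq, map_neg, Psi_apply, Psi_apply, hs, hw]
      refine Prod.ext ?_ ?_
      · show algebraMap (PowerSeries ℂ) LL p ^ 2
            + -(algebraMap (PowerSeries ℂ) LL (p + PowerSeries.C d0))
              * algebraMap (PowerSeries ℂ) LL p
            + algebraMap (PowerSeries ℂ) LL (p * PowerSeries.C d0) = 0
        rw [← map_pow, ← map_neg, ← map_mul, ← map_add, ← map_add]
        rw [show p ^ 2 + -(p + PowerSeries.C d0) * p + p * PowerSeries.C d0 = 0 by ring]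
        exact map_zero _
      · show algebraMap (PowerSeries ℂ) LL q ^ 2
            + -(algebraMap (PowerSeries ℂ) LL (q + PowerSeries.C c0))
              * algebraMap (PowerSeries ℂ) LL q
            + algebraMap (PowerSeries ℂ) LL (PowerSeries.C c0 * q) = 0
        rw [← map_pow, ← map_neg, ← map_mul, ← map_add, ← map_add]
        rw [show q ^ 2 + -(q + PowerSeries.C c0) * q + PowerSeries.C c0 * q = 0 by ring]
        exact map_zero _

end

noncomputable section

def algX : LL := algebraMap (PowerSeries ℂ) LL PowerSeries.X

lemma algX_ne_zero : algX ≠ 0 := by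
  intro h
  exact PowerSeries.X_ne_zero (algPSL_injective (by rw [← algX, h, map_zero]))

def w0 : K0 := (algX⁻¹, algX⁻¹)

/-- The map `M → K₀`, `(a,b) ↦ (a+b)/t`. -/
def Fmap : ↥nodeBarletModule →ₗ[nodeRing] K0 where
  toFun z := algebraMap nodeRing K0 (z.val.1 + z.val.2) * w0
  map_add' z z' := by
    simp only [Submodule.coe_add, Prod.fst_add, Prod.snd_add]
    rw [show z.val.1 + z'.val.1 + (z.val.2 + z'.val.2)
      = (z.val.1 + z.val.2) + (z'.val.1 + z'.val.2) by ring, map_add, add_mul]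
  map_smul' c z := by
    simp only [Submodule.coe_smul, Prod.smul_fst, Prod.smul_snd, smul_eq_mul, RingHom.id_apply]
    rw [show c * z.val.1 + c * z.val.2 = c * (z.val.1 + z.val.2) by ring, map_mul]
    rw [Algebra.smul_def, mul_assoc]

lemma Fmap_apply_of (z : ↥nodeBarletModule) (p q : PowerSeries ℂ)
    (h : phi (z.val.1 + z.val.2) = (PowerSeries.X * p, PowerSeries.X * q)) :
    Fmap z = (algebraMap (PowerSeries ℂ) LL p, algebraMap (PowerSeries ℂ) LL q) := by
  show algebraMap nodeRing K0 (z.val.1 + z.val.2) * w0 = _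
  rw [algebraMap_K0_eq, Psi_apply, h]
  refine Prod.ext ?_ ?_ <;>
  · show algebraMap (PowerSeries ℂ) LL (PowerSeries.X * _) * algX⁻¹ = _
    rw [map_mul, ← algX, mul_comm algX, mul_assoc, mul_inv_cancel₀ algX_ne_zero, mul_one]

/-- Every element of `M` maps to an explicit pair of power series. -/
lemma Fmap_exists (z : ↥nodeBarletModule) :
    ∃ p q : PowerSeries ℂ,
      phi (z.val.1 + z.val.2) = (PowerSeries.X * p, PowerSeries.X * q) := by
  obtain ⟨⟨a, b⟩, hz⟩ := z
  rw [mem_M_iff] at hz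
  have hb : PowerSeries.constantCoeff (phi b).1 = 0 := by rw [const_phi, hz.2, map_zero]
  have ha : PowerSeries.constantCoeff (phi a).2 = 0 := by rw [← const_phi, hz.1, map_zero]
  obtain ⟨p, hp⟩ := PowerSeries.X_dvd_iff.mpr hb
  obtain ⟨q, hq⟩ := PowerSeries.X_dvd_iff.mpr ha
  refine ⟨p, q, ?_⟩
  rw [map_add]
  refine Prod.ext ?_ ?_
  · show (phi a).1 + (phi b).1 = _
    rw [hz.1, zero_add, hp]
  · show (phi a).2 + (phi b).2 = _
    rw [hz.2, add_zero, hq]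

lemma Fmap_mem_intcl (z : ↥nodeBarletModule) : Fmap z ∈ integralClosure nodeRing K0 := by
  obtain ⟨p, q, h⟩ := Fmap_exists z
  rw [mem_intcl_iff]
  exact ⟨p, q, Fmap_apply_of z p q h⟩

lemma Fmap_ker (w : ↥nodeBarletModule) (h0 : Fmap w = 0) : w = 0 := by
  obtain ⟨p, q, h⟩ := Fmap_exists w
  rw [Fmap_apply_of _ p q h] at h0
  have hp : p = 0 := algPSL_injective (by rw [map_zero]; exact congrArg Prod.fst h0)
  have hq : q = 0 := algPSL_injective (by rw [map_zero]; exact congrArg Prod.snd h0)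
  simp only [hp, hq, mul_zero] at h
  obtain ⟨⟨a, b⟩, hmem⟩ := w
  have hz2 := (mem_M_iff a b).mp hmem
  have hsum : a + b = 0 := phi_injective (by rw [map_zero]; exact h)
  have hphisum : phi a + phi b = 0 := by rw [← map_add, hsum, map_zero]
  have h1 : (phi a).2 = 0 := by
    have hh : (phi a).2 + (phi b).2 = 0 := congrArg Prod.snd hphisum
    rwa [hz2.2, add_zero] at hh
  have h2 : (phi b).1 = 0 := by
    have hh : (phi a).1 + (phi b).1 = 0 := congrArg Prod.fst hphisum
    rwa [hz2.1, zero_add] at hh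
  have e1 : a = 0 := phi_injective (by
    rw [map_zero]; exact Prod.ext (by rw [hz2.1]; rfl) (by rw [h1]; rfl))
  have e2 : b = 0 := phi_injective (by
    rw [map_zero]; exact Prod.ext (by rw [h2]; rfl) (by rw [hz2.2]; rfl))
  exact Subtype.ext (Prod.ext e1 e2)

lemma Fmap_injective : Function.Injective Fmap := by
  intro z z' hzz
  have hk := Fmap_ker (z - z') (by rw [map_sub, hzz, sub_self])
  rwa [sub_eq_zero] at hk

lemma Fmap_surjective_onto :
    ∀ v ∈ integralClosure nodeRing K0, ∃ z : ↥nodeBarletModule, Fmap z = v := by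
  intro v hv
  obtain ⟨p, q, rfl⟩ := (mem_intcl_iff v).mp hv
  obtain ⟨a, ha⟩ := exists_lift 0 (PowerSeries.X * q) (by simp)
  obtain ⟨b, hb⟩ := exists_lift (PowerSeries.X * p) 0 (by simp)
  have hmem : (a, b) ∈ nodeBarletModule := by
    rw [mem_M_iff, ha, hb]
    exact ⟨rfl, rfl⟩
  refine ⟨⟨(a, b), hmem⟩, ?_⟩
  apply Fmap_apply_of _ p q
  show phi (a + b) = _
  rw [map_add, ha, hb]
  refine Prod.ext (by simp) (by simp)

end

noncomputable section

lemma intcl_equiv_nonempty (K : Type) [CommRing K] [Algebra nodeRing K]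
    [IsFractionRing nodeRing K] :
    Nonempty (↥nodeBarletModule ≃ₗ[nodeRing] ↥(integralClosure nodeRing K)) := by
  let F' : ↥nodeBarletModule →ₗ[nodeRing]
      ↥(Subalgebra.toSubmodule (integralClosure nodeRing K0)) :=
    Fmap.codRestrict _ Fmap_mem_intcl
  have hbij : Function.Bijective F' := by
    constructor
    · intro z z' hzz
      exact Fmap_injective (congrArg Subtype.val hzz)
    · rintro ⟨v, hv⟩
      obtain ⟨z, hz⟩ := Fmap_surjective_onto v hv
      exact ⟨z, Subtype.ext hz⟩
  let e1 := LinearEquiv.ofBijective F' hbij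
  let σ : K0 ≃ₐ[nodeRing] K := IsLocalization.algEquiv (nonZeroDivisors nodeRing) K0 K
  have hfwd : ∀ z : K0, z ∈ integralClosure nodeRing K0 → σ z ∈ integralClosure nodeRing K :=
    fun z hz => by
      haveI : IsScalarTower nodeRing nodeRing K0 :=
        ⟨fun x y z => by simp only [smul_eq_mul, Algebra.smul_def, map_mul, mul_assoc]⟩
      haveI : IsScalarTower nodeRing nodeRing K :=
        ⟨fun x y z => by simp only [smul_eq_mul, Algebra.smul_def, map_mul, mul_assoc]⟩
      exact IsIntegral.map σ.toAlgHom hz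
  have hbwd : ∀ w : K, w ∈ integralClosure nodeRing K → σ.symm w ∈ integralClosure nodeRing K0 :=
    fun w hw => by
      haveI : IsScalarTower nodeRing nodeRing K :=
        ⟨fun x y z => by simp only [smul_eq_mul, Algebra.smul_def, map_mul, mul_assoc]⟩
      haveI : IsScalarTower nodeRing nodeRing K0 :=
        ⟨fun x y z => by simp only [smul_eq_mul, Algebra.smul_def, map_mul, mul_assoc]⟩
      exact IsIntegral.map σ.symm.toAlgHom hw
  let e2 : ↥(integralClosure nodeRing K0) ≃ₗ[nodeRing] ↥(integralClosure nodeRing K) :=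
    { toFun := fun z => ⟨σ z.val, hfwd z.val z.2⟩
      invFun := fun w => ⟨σ.symm w.val, hbwd w.val w.2⟩
      left_inv := fun z => Subtype.ext (σ.symm_apply_apply z.val)
      right_inv := fun w => Subtype.ext (σ.apply_symm_apply w.val)
      map_add' := fun z z' => Subtype.ext (map_add σ z.val z'.val)
      map_smul' := fun c z => Subtype.ext (map_smul σ c z.val) }
  exact ⟨e1.trans e2⟩

-- ℂ-linearity of phi
lemma phi_smul (r : ℂ) (a : nodeRing) : phi (r • a) = r • phi a := by
  obtain ⟨f, rfl⟩ := Ideal.Quotient.mk_surjective a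
  rw [show r • (Ideal.Quotient.mk _ f : nodeRing) = Ideal.Quotient.mk _ (r • f) from rfl,
    phi_mk, phi_mk]
  refine Prod.ext ?_ ?_ <;>
  · ext n
    show PowerSeries.coeff n (pev _ (r • f)) = PowerSeries.coeff n (r • pev _ f)
    rw [pev_coeff, map_smul, map_smul, pev_coeff]

def Lam : (nodeRing × nodeRing) →ₗ[ℂ] ℂ where
  toFun z := PowerSeries.coeff 1 (phi z.1).2 - PowerSeries.coeff 1 (phi z.2).1
  map_add' z z' := by
    show PowerSeries.coeff 1 (phi (z.1 + z'.1)).2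
        - PowerSeries.coeff 1 (phi (z.2 + z'.2)).1 = _
    rw [map_add, map_add]
    show PowerSeries.coeff 1 ((phi z.1).2 + (phi z'.1).2)
      - PowerSeries.coeff 1 ((phi z.2).1 + (phi z'.2).1) = _
    rw [map_add, map_add]
    show _ = (PowerSeries.coeff 1 (phi z.1).2 - PowerSeries.coeff 1 (phi z.2).1)
      + (PowerSeries.coeff 1 (phi z'.1).2 - PowerSeries.coeff 1 (phi z'.2).1)
    ring
  map_smul' r z := by
    simp only [Prod.smul_fst, Prod.smul_snd, RingHom.id_apply, smul_eq_mul]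
    rw [phi_smul, phi_smul]
    show PowerSeries.coeff 1 (r • (phi z.1)).2 - PowerSeries.coeff 1 (r • (phi z.2)).1 = _
    rw [show (r • (phi z.1)).2 = r • (phi z.1).2 from rfl,
      show (r • (phi z.2)).1 = r • (phi z.2).1 from rfl, map_smul, map_smul]
    show r * _ - r * _ = _
    ring

lemma Lam_iota (c : nodeRing) : Lam (nodeIota c) = 0 := by
  show PowerSeries.coeff 1 (phi (c * ybar)).2 - PowerSeries.coeff 1 (phi (c * xbar)).1 = 0
  rw [map_mul, map_mul, phi_ybar, phi_xbar]
  show PowerSeries.coeff 1 ((phi c).2 * PowerSeries.X)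
    - PowerSeries.coeff 1 ((phi c).1 * PowerSeries.X) = 0
  rw [mul_comm, mul_comm ((phi c).1), PowerSeries.coeff_succ_X_mul 0,
    PowerSeries.coeff_succ_X_mul 0]
  rw [PowerSeries.coeff_zero_eq_constantCoeff_apply, PowerSeries.coeff_zero_eq_constantCoeff_apply,
    const_phi]
  ring

lemma Lam_ker_sub (a b : nodeRing) (hmem : (a, b) ∈ nodeBarletModule)
    (h0 : Lam (a, b) = 0) : ∃ c : nodeRing, nodeIota c = (a, b) := by
  have hz2 := (mem_M_iff a b).mp hmem
  have hb : PowerSeries.constantCoeff (phi b).1 = 0 := by rw [const_phi, hz2.2, map_zero]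
  have ha : PowerSeries.constantCoeff (phi a).2 = 0 := by rw [← const_phi, hz2.1, map_zero]
  obtain ⟨p, hp⟩ := PowerSeries.X_dvd_iff.mpr hb
  obtain ⟨q, hq⟩ := PowerSeries.X_dvd_iff.mpr ha
  have hL : Lam (a, b) = PowerSeries.constantCoeff q - PowerSeries.constantCoeff p := by
    show PowerSeries.coeff 1 (phi a).2 - PowerSeries.coeff 1 (phi b).1 = _
    rw [hp, hq, PowerSeries.coeff_succ_X_mul 0, PowerSeries.coeff_succ_X_mul 0,
      PowerSeries.coeff_zero_eq_constantCoeff_apply, PowerSeries.coeff_zero_eq_constantCoeff_apply]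
  rw [hL] at h0
  obtain ⟨c, hc⟩ := exists_lift p q (sub_eq_zero.mp h0).symm
  refine ⟨c, ?_⟩
  have hcy : c * ybar = a := by
    apply phi_injective
    rw [map_mul, phi_ybar, hc]
    refine Prod.ext ?_ ?_
    · show p * 0 = (phi a).1
      rw [hz2.1, mul_zero]
    · show q * PowerSeries.X = (phi a).2
      rw [hq, mul_comm]
  have hcx : c * xbar = b := by
    apply phi_injective
    rw [map_mul, phi_xbar, hc]
    refine Prod.ext ?_ ?_
    · show p * PowerSeries.X = (phi b).1
      rw [hp, mul_comm]
    · show q * 0 = (phi b).2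
      rw [hz2.2, mul_zero]
  show (c * ybar, c * xbar) = (a, b)
  rw [hcy, hcx]

lemma ybar_mem_M : (ybar, (0 : nodeRing)) ∈ nodeBarletModule := by
  rw [mem_M_iff, phi_ybar, map_zero]
  exact ⟨rfl, rfl⟩

lemma Lam_ybar : Lam (ybar, 0) = 1 := by
  show PowerSeries.coeff 1 (phi ybar).2 - PowerSeries.coeff 1 (phi 0).1 = 1
  rw [phi_ybar, map_zero]
  show PowerSeries.coeff 1 PowerSeries.X - PowerSeries.coeff 1 (0 : PowerSeries ℂ) = 1
  rw [PowerSeries.coeff_one_X, map_zero]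
  ring

lemma finrank_part :
    Module.finrank ℂ
      (↥(Submodule.restrictScalars ℂ nodeBarletModule) ⧸
        Submodule.comap (Submodule.restrictScalars ℂ nodeBarletModule).subtype
          (LinearMap.range nodeIota)) = 1 := by
  set Mc := Submodule.restrictScalars ℂ nodeBarletModule with hMc
  set N := Submodule.comap Mc.subtype (LinearMap.range nodeIota) with hN
  set g : ↥Mc →ₗ[ℂ] ℂ := Lam.comp Mc.subtype with hg
  have h1 : N ≤ LinearMap.ker g := by
    rintro z hz
    obtain ⟨c, hc⟩ := hz
    show Lam z.val = 0
    have hval : z.val = nodeIota c := hc.symm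
    rw [hval]
    exact Lam_iota c
  set lift : (↥Mc ⧸ N) →ₗ[ℂ] ℂ := Submodule.liftQ N g h1 with hlift
  have hsurj : Function.Surjective lift := by
    intro r
    refine ⟨Submodule.Quotient.mk (r • ⟨(ybar, 0), ybar_mem_M⟩), ?_⟩
    rw [hlift, Submodule.liftQ_apply]
    rw [hg]
    show Lam (r • ((ybar, 0) : nodeRing × nodeRing)) = r
    rw [map_smul, Lam_ybar, smul_eq_mul, mul_one]
  have hinj : Function.Injective lift := by
    rw [← LinearMap.ker_eq_bot]
    apply Submodule.ker_liftQ_eq_bot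
    rintro z hz
    have hz' : Lam z.val = 0 := hz
    obtain ⟨c, hc⟩ := Lam_ker_sub z.val.1 z.val.2 z.2 (by exact hz')
    exact ⟨c, hc⟩
  have e := LinearEquiv.ofBijective lift ⟨hinj, hsurj⟩
  rw [e.finrank_eq, Module.finrank_self]

end

theorem barlet_module_of_node
    (K : Type) [CommRing K] [Algebra nodeRing K] [IsFractionRing nodeRing K] :
    nodeBarletModule =
        Submodule.prod (Ideal.span {ybar}) (Ideal.span {xbar}) ∧
    Nonempty (↥nodeBarletModule ≃ₗ[nodeRing] ↥(integralClosure nodeRing K)) ∧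
    Module.finrank ℂ
      (↥(Submodule.restrictScalars ℂ nodeBarletModule) ⧸
        Submodule.comap (Submodule.restrictScalars ℂ nodeBarletModule).subtype
          (LinearMap.range nodeIota)) = 1 := by
  exact ⟨part1, intcl_equiv_nonempty K, finrank_part⟩
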